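/- Let A be a set of ordinals. Then the set X := {β : there exists a ∈ A_β with w < a for every w ∈ W_β(A)} is a finite set of ordinals. -/

import Mathlib

open Set

/-- `x` is a limit point of the set `B` of ordinals: `x` is a limit ordinal and
`B ∩ x` is unbounded in `x`. -/
def limitPts (B : Set Ordinal) : Set Ordinal :=
  {x : Ordinal | Order.IsSuccLimit x ∧ ∀ y < x, ∃ b ∈ B, y < b ∧ b < x}

/-- `CBge A α` is `A_{≥α}`, the set of elements of `A` of Cantor–Bendixson rank `≥ α`:
`A_{≥α} = A \ ⋃_{β<α} A_β` where `A_β = A_{≥β} \ (A_{≥β})*`. -/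
noncomputable def CBge (A : Set Ordinal) : Ordinal → Set Ordinal :=
  Ordinal.lt_wf.fix (C := fun _ => Set Ordinal) fun α IH =>
    A \ ⋃ (β : Ordinal), ⋃ (h : β < α), (IH β h \ limitPts (IH β h))

/-- `CBpart A β` is `A_β`, the set of elements of `A` of Cantor–Bendixson rank exactly `β`. -/
noncomputable def CBpart (A : Set Ordinal) (β : Ordinal) : Set Ordinal :=
  CBge A β \ limitPts (CBge A β)

/-- The set of ω-limits of a set `B` of ordinals: suprema of strictly increasing
ℕ-indexed sequences of elements of `B`. -/
def omegaLimits (B : Set Ordinal) : Set Ordinal :=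
  {l : Ordinal | ∃ f : ℕ → Ordinal, StrictMono f ∧ (∀ n, f n ∈ B) ∧ l = ⨆ n, f n}

/-- `Wpart A β` is `W_β(A)`, the set of ω-limits of `A_β`. -/
noncomputable def Wpart (A : Set Ordinal) (β : Ordinal) : Set Ordinal :=
  omegaLimits (CBpart A β)

/-- `Sseq A β lam` is `S_β^λ(A) = {x ∈ A_β : sup(W_β(A) ∩ λ) < x < λ}`. -/
noncomputable def Sseq (A : Set Ordinal) (β lam : Ordinal) : Set Ordinal :=
  {x : Ordinal | x ∈ CBpart A β ∧ sSup (Wpart A β ∩ Set.Iio lam) < x ∧ x < lam}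

/-- The defining fixed-point equation for `CBge`. -/
lemma CBge_eq (A : Set Ordinal) (α : Ordinal) :
    CBge A α = A \ ⋃ (β : Ordinal), ⋃ (_ : β < α), CBpart A β := by
  rw [CBge, Ordinal.lt_wf.fix_eq]
  rfl

/-- `CBge A` is antitone. -/
lemma CBge_antitone (A : Set Ordinal) {α α' : Ordinal} (h : α ≤ α') :
    CBge A α' ⊆ CBge A α := by
  rw [CBge_eq, CBge_eq]
  intro x hx
  refine ⟨hx.1, fun hc => hx.2 ?_⟩
  simp only [mem_iUnion] at hc ⊢
  obtain ⟨β, hβ, hb⟩ := hc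
  exact ⟨β, hβ.trans_le h, hb⟩

/-- An element of rank `≥ α` is not of rank `β` for `β < α`. -/
lemma not_mem_CBpart_of_mem_CBge (A : Set Ordinal) {α β x : Ordinal} (h : β < α)
    (hx : x ∈ CBge A α) : x ∉ CBpart A β := by
  rw [CBge_eq] at hx
  intro hc
  exact hx.2 (by simp only [mem_iUnion]; exact ⟨β, h, hc⟩)

/-- An element of rank `≥ α` is a limit point of `A_{≥β}` for `β < α`. -/
lemma mem_limitPts_of_mem_CBge (A : Set Ordinal) {α β x : Ordinal} (h : β < α)
    (hx : x ∈ CBge A α) : x ∈ limitPts (CBge A β) := by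
  have hβ : x ∈ CBge A β := CBge_antitone A h.le hx
  by_contra h'
  exact not_mem_CBpart_of_mem_CBge A h hx ⟨hβ, h'⟩

/-- Any limit point of `A_{≥β}` is approached by elements of rank exactly `β`. -/
lemma dense_CBpart (A : Set Ordinal) {β x : Ordinal} (hx : x ∈ limitPts (CBge A β))
    {y : Ordinal} (hy : y < x) : ∃ b ∈ CBpart A β, y < b ∧ b < x := by
  obtain ⟨b0, hb0, hyb0, hb0x⟩ := hx.2 y hy
  have hne : {b : Ordinal | b ∈ CBge A β ∧ y < b ∧ b < x}.Nonempty := ⟨b0, hb0, hyb0, hb0x⟩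
  obtain ⟨m, hm, hmin⟩ := Ordinal.lt_wf.has_min _ hne
  by_cases hp : m ∈ CBpart A β
  · exact ⟨m, hp, hm.2⟩
  · have hlim : m ∈ limitPts (CBge A β) := by
      by_contra h'
      exact hp ⟨hm.1, h'⟩
    obtain ⟨b', hb', hyb', hb'm⟩ := hlim.2 y hm.2.1
    exact absurd hb'm (hmin b' ⟨hb', hyb', hb'm.trans hm.2.2⟩)

/-- The set of ranks `β` for which some element of `A_β` lies strictly above
every element of `W_β(A)` is finite. -/
theorem finite_ranks_with_element_above_omegaLimits (A : Set Ordinal) :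
    {β : Ordinal | ∃ a ∈ CBpart A β, ∀ w ∈ Wpart A β, w < a}.Finite := by
  set X := {β : Ordinal | ∃ a ∈ CBpart A β, ∀ w ∈ Wpart A β, w < a} with hX
  -- each rank in X has a maximal element
  have hmax : ∀ β ∈ X, ∃ m ∈ CBpart A β, ∀ b ∈ CBpart A β, b ≤ m := by
    intro β hβ
    obtain ⟨a, ha, hwa⟩ := hβ
    by_contra hcon
    push_neg at hcon
    -- every element has a strictly larger one; build an increasing sequence
    have step : ∀ m : {b // b ∈ CBpart A β}, ∃ b : {b // b ∈ CBpart A β}, m.1 < b.1 := by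
      intro m
      obtain ⟨b, hb, hlt⟩ := hcon m.1 m.2
      exact ⟨⟨b, hb⟩, hlt⟩
    let g : {b // b ∈ CBpart A β} → {b // b ∈ CBpart A β} := fun m => (step m).choose
    have hg : ∀ m, m.1 < (g m).1 := fun m => (step m).choose_spec
    let f : ℕ → {b // b ∈ CBpart A β} := fun n => g^[n] ⟨a, ha⟩
    have hmono : StrictMono (fun n => (f n).1) := by
      apply strictMono_nat_of_lt_succ
      intro n
      have : f (n + 1) = g (f n) := Function.iterate_succ_apply' g n _
      rw [this]
      exact hg (f n)
    have hw : (⨆ n, (f n).1) ∈ Wpart A β :=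
      ⟨fun n => (f n).1, hmono, fun n => (f n).2, rfl⟩
    have h1 : (f 1).1 ≤ ⨆ n, (f n).1 := le_ciSup (Ordinal.bddAbove_range _) 1
    have h2 : a < (f 1).1 := by
      have : (f 0).1 = a := rfl
      simpa [this] using hmono (Nat.zero_lt_one)
    exact absurd (hwa _ hw) (not_lt.2 (le_of_lt (h2.trans_le h1)))
  classical
  let lam : Ordinal → Ordinal := fun β =>
    if h : β ∈ X then (hmax β h).choose else 0
  have hlam_mem : ∀ β (h : β ∈ X), lam β ∈ CBpart A β := by
    intro β h; simp only [lam, dif_pos h]; exact (hmax β h).choose_spec.1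
  have hlam_max : ∀ β (h : β ∈ X), ∀ b ∈ CBpart A β, b ≤ lam β := by
    intro β h; simp only [lam, dif_pos h]; exact (hmax β h).choose_spec.2
  have hanti : ∀ β ∈ X, ∀ γ ∈ X, β < γ → lam γ < lam β := by
    intro β hβ γ hγ hlt
    have hγmem : lam γ ∈ CBge A γ := (hlam_mem γ hγ).1
    have hlp : lam γ ∈ limitPts (CBge A β) := mem_limitPts_of_mem_CBge A hlt hγmem
    rcases lt_trichotomy (lam γ) (lam β) with h | h | h
    · exact h
    · exact absurd (h ▸ hlp) (hlam_mem β hβ).2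
    · obtain ⟨b, hb, hyb, _⟩ := dense_CBpart A hlp h
      exact absurd (hlam_max β hβ b hb) (not_le.2 hyb)
  -- conclude finiteness: otherwise we get an infinite descending sequence of ordinals
  by_contra hfin
  have hinf : X.Infinite := hfin
  let e := hinf.natEmbedding X
  have hpwo : X.IsPWO := (Set.IsWF.mono ((Set.isWF_univ_iff (α := Ordinal)).2 inferInstance) (subset_univ X)).isPWO
  obtain ⟨g, hg⟩ := hpwo.exists_monotone_subseq (f := fun n => (e n).1) (fun n => (e n).2)
  have hinj : Function.Injective (fun n => ((e (g n)).1 : Ordinal)) := by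
    intro m n h
    exact g.injective (e.injective (Subtype.ext h))
  have hsm : StrictMono (fun n => ((e (g n)).1 : Ordinal)) := hg.strictMono_of_injective hinj
  have hdesc : ∀ n : ℕ, lam ((e (g (n+1))).1) < lam ((e (g n)).1) :=
    fun n => hanti _ (e (g n)).2 _ (e (g (n+1))).2 (hsm (Nat.lt_succ_self n))
  exact (RelEmbedding.wellFounded_iff_isEmpty.mp Ordinal.lt_wf).false
    (RelEmbedding.natGT (fun n => lam ((e (g n)).1)) hdesc)
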